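/- The number λ_{n+4} of self-dual monotone Boolean functions on n+4 variables equals Σ_{a,b,c ∈ D_n} Σ_{h ∈ D_n, h ≥ a|b|c|a*|b*|c*} re[a|b|c, h] · re[a|b*|c*, h] · re[b|a*|c*, h] · re[c|a*|b*, h], where re[x,y] = |{z ∈ D_n : x ≤ z ≤ y}|. -/

import Mathlib

abbrev BF (n : ℕ) := (Fin n → Bool) → Bool

def dual {n : ℕ} (f : BF n) : BF n := fun v => ! f (fun i => ! v i)

def SelfDual {n : ℕ} (f : BF n) : Prop := f = dual f

open Classical in
/-- The number of self-dual monotone Boolean functions on `m` variables. -/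
noncomputable def lambda (m : ℕ) : ℕ :=
  (Finset.univ.filter fun x : BF m => Monotone x ∧ SelfDual x).card

open Classical in
/-- `D n` as a finset: all monotone Boolean functions on `n` variables. -/
noncomputable def Dset (n : ℕ) : Finset (BF n) :=
  Finset.univ.filter fun f => Monotone f

open Classical in
/-- `re x y = |{z ∈ D_n : x ≤ z ≤ y}|`. -/
noncomputable def re {n : ℕ} (x y : BF n) : ℕ :=
  (Finset.univ.filter fun z : BF n => Monotone z ∧ x ≤ z ∧ z ≤ y).card

lemma bnot_le_bnot {a b : Bool} (h : a ≤ b) : (!b) ≤ (!a) := by revert h; revert a b; decide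

lemma dual_dual (x : BF n) : dual (dual x) = x := by
  funext v; simp [dual]

lemma dual_le_dual {x y : BF n} (hxy : x ≤ y) : dual y ≤ dual x := by
  intro v
  simp only [dual]
  exact bnot_le_bnot (hxy (fun i => ! v i))

lemma monotone_dual {x : BF n} (hx : Monotone x) : Monotone (dual x) := by
  intro v v' hv
  simp only [dual]
  have hvv : (fun i => ! v' i) ≤ (fun i => ! v i) := fun i => bnot_le_bnot (hv i)
  exact bnot_le_bnot (hx hvv)

def glue (v : Fin n → Bool) (w : Fin 4 → Bool) : Fin (n + 4) → Bool :=
  fun i => if h : (i : ℕ) < n then v ⟨i, h⟩ else w ⟨(i : ℕ) - n, by omega⟩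

def front (u : Fin (n + 4) → Bool) : Fin n → Bool := fun i => u ⟨i, by omega⟩
def back (u : Fin (n + 4) → Bool) : Fin 4 → Bool := fun k => u ⟨n + k, by omega⟩

lemma glue_front_back (u : Fin (n + 4) → Bool) : glue (front u) (back u) = u := by
  funext i
  simp only [glue, front, back]
  split
  · congr
  · congr 1; ext; simp; omega

lemma front_glue (v : Fin n → Bool) (w : Fin 4 → Bool) : front (glue v w) = v := by
  funext i; simp [glue, front]

lemma back_glue (v : Fin n → Bool) (w : Fin 4 → Bool) : back (glue v w) = w := by
  funext k; simp [glue, back]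

lemma glue_mono {v v' : Fin n → Bool} {w w' : Fin 4 → Bool} (hv : v ≤ v') (hw : w ≤ w') :
    glue v w ≤ glue v' w' := by
  intro i
  simp only [glue]
  split
  · exact hv _
  · exact hw _

lemma not_glue (v : Fin n → Bool) (w : Fin 4 → Bool) :
    (fun i => ! glue v w i) = glue (fun i => ! v i) (fun k => ! w k) := by
  funext i; simp only [glue]; split <;> rfl

def comp (f : BF (n + 4)) (w : Fin 4 → Bool) : BF n := fun v => f (glue v w)

lemma monotone_comp {f : BF (n + 4)} (hf : Monotone f) (w : Fin 4 → Bool) :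
    Monotone (comp f w) := fun _ _ hv => hf (glue_mono hv le_rfl)

lemma comp_le_comp {f : BF (n + 4)} (hf : Monotone f) {w w' : Fin 4 → Bool} (hw : w ≤ w') :
    comp f w ≤ comp f w' := fun _ => hf (glue_mono le_rfl hw)

lemma selfDual_apply {f : BF (n + 4)} (hf : SelfDual f) (u : Fin (n + 4) → Bool) :
    f u = ! f (fun i => ! u i) := by
  conv_lhs => rw [hf]
  rfl

lemma dual_comp {f : BF (n + 4)} (hf : SelfDual f) (w : Fin 4 → Bool) :
    dual (comp f w) = comp f (fun k => ! w k) := by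
  funext v
  simp only [dual, comp]
  rw [selfDual_apply hf (glue v (fun k => ! w k)), not_glue]
  simp [Bool.not_not]

/-- Assemble a monotone self-dual function from components. -/
def G4 (a b c h z1 z2 z3 z4 : BF n) : Bool → Bool → Bool → Bool → BF n :=
  fun b0 b1 b2 b3 => match b0, b1, b2, b3 with
  | false, false, false, false => dual h
  | true,  false, false, false => dual z1
  | false, true,  false, false => dual z2
  | false, false, true,  false => dual z3
  | false, false, false, true  => dual z4
  | false, false, true,  true  => a
  | false, true,  false, true  => b
  | false, true,  true,  false => c
  | true,  true,  false, false => dual a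
  | true,  false, true,  false => dual b
  | true,  false, false, true  => dual c
  | false, true,  true,  true  => z1
  | true,  false, true,  true  => z2
  | true,  true,  false, true  => z3
  | true,  true,  true,  false => z4
  | true,  true,  true,  true  => h

lemma G4_mono {a b c h z1 z2 z3 z4 : BF n}
    (ha1 : a ≤ z1) (hb1 : b ≤ z1) (hc1 : c ≤ z1)
    (ha2 : a ≤ z2) (hb2 : dual b ≤ z2) (hc2 : dual c ≤ z2)
    (hb3 : b ≤ z3) (ha3 : dual a ≤ z3) (hc3 : dual c ≤ z3)
    (hc4 : c ≤ z4) (ha4 : dual a ≤ z4) (hb4 : dual b ≤ z4)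
    (h1 : z1 ≤ h) (h2 : z2 ≤ h) (h3 : z3 ≤ h) (h4 : z4 ≤ h)
    {b0 b1 b2 b3 b0' b1' b2' b3' : Bool}
    (e0 : b0 ≤ b0') (e1 : b1 ≤ b1') (e2 : b2 ≤ b2') (e3 : b3 ≤ b3') :
    G4 a b c h z1 z2 z3 z4 b0 b1 b2 b3 ≤ G4 a b c h z1 z2 z3 z4 b0' b1' b2' b3' := by
  have d1 : dual h ≤ dual z1 := dual_le_dual h1
  have d2 : dual h ≤ dual z2 := dual_le_dual h2
  have d3 : dual h ≤ dual z3 := dual_le_dual h3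
  have d4 : dual h ≤ dual z4 := dual_le_dual h4
  have da1 : dual z1 ≤ dual a := dual_le_dual ha1
  have db1 : dual z1 ≤ dual b := dual_le_dual hb1
  have dc1 : dual z1 ≤ dual c := dual_le_dual hc1
  have da2 : dual z2 ≤ dual a := dual_le_dual ha2
  have db2 : dual z2 ≤ b := by have := dual_le_dual hb2; rwa [dual_dual] at this
  have dc2 : dual z2 ≤ c := by have := dual_le_dual hc2; rwa [dual_dual] at this
  have db3 : dual z3 ≤ dual b := dual_le_dual hb3
  have da3 : dual z3 ≤ a := by have := dual_le_dual ha3; rwa [dual_dual] at this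
  have dc3 : dual z3 ≤ c := by have := dual_le_dual hc3; rwa [dual_dual] at this
  have dc4 : dual z4 ≤ dual c := dual_le_dual hc4
  have da4 : dual z4 ≤ a := by have := dual_le_dual ha4; rwa [dual_dual] at this
  have db4 : dual z4 ≤ b := by have := dual_le_dual hb4; rwa [dual_dual] at this
  have pa : dual h ≤ a := d3.trans da3
  have pb : dual h ≤ b := d4.trans db4
  have pc : dual h ≤ c := d2.trans dc2
  have pda : dual h ≤ dual a := d1.trans da1
  have pdb : dual h ≤ dual b := d1.trans db1
  have pdc : dual h ≤ dual c := d1.trans dc1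
  have qa : a ≤ h := ha1.trans h1
  have qb : b ≤ h := hb1.trans h1
  have qc : c ≤ h := hc1.trans h1
  have qda : dual a ≤ h := ha3.trans h3
  have qdb : dual b ≤ h := hb2.trans h2
  have qdc : dual c ≤ h := hc2.trans h2
  have q12 : dual z1 ≤ z2 := db1.trans hb2
  have q13 : dual z1 ≤ z3 := da1.trans ha3
  have q14 : dual z1 ≤ z4 := da1.trans ha4
  have q21 : dual z2 ≤ z1 := db2.trans hb1
  have q23 : dual z2 ≤ z3 := da2.trans ha3
  have q24 : dual z2 ≤ z4 := dc2.trans hc4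
  have q31 : dual z3 ≤ z1 := da3.trans ha1
  have q32 : dual z3 ≤ z2 := da3.trans ha2
  have q34 : dual z3 ≤ z4 := dc3.trans hc4
  have q41 : dual z4 ≤ z1 := da4.trans ha1
  have q42 : dual z4 ≤ z2 := da4.trans ha2
  have q43 : dual z4 ≤ z3 := db4.trans hb3
  have r1 : dual h ≤ z1 := d2.trans q21
  have r2 : dual h ≤ z2 := d1.trans q12
  have r3 : dual h ≤ z3 := d1.trans q13
  have r4 : dual h ≤ z4 := d1.trans q14
  have s1 : dual z1 ≤ h := q12.trans h2
  have s2 : dual z2 ≤ h := q21.trans h1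
  have s3 : dual z3 ≤ h := q31.trans h1
  have s4 : dual z4 ≤ h := q41.trans h1
  have rh : dual h ≤ h := r1.trans h1
  cases b0 <;> cases b0' <;> cases b1 <;> cases b1' <;> cases b2 <;> cases b2' <;>
    cases b3 <;> cases b3' <;>
    simp only [G4] <;>
    first
      | exact absurd e0 (by decide)
      | exact absurd e1 (by decide)
      | exact absurd e2 (by decide)
      | exact absurd e3 (by decide)
      | exact le_rfl
      | assumption

lemma G4_monotone_comp {a b c h z1 z2 z3 z4 : BF n}
    (ma : Monotone a) (mb : Monotone b) (mc : Monotone c) (mh : Monotone h)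
    (m1 : Monotone z1) (m2 : Monotone z2) (m3 : Monotone z3) (m4 : Monotone z4)
    (b0 b1 b2 b3 : Bool) : Monotone (G4 a b c h z1 z2 z3 z4 b0 b1 b2 b3) := by
  cases b0 <;> cases b1 <;> cases b2 <;> cases b3 <;> simp only [G4] <;>
    first
      | assumption
      | exact monotone_dual ‹_›

/-- Build a function on `n+4` variables from components. -/
def build (a b c h z1 z2 z3 z4 : BF n) : BF (n + 4) :=
  fun u => G4 a b c h z1 z2 z3 z4 (back u 0) (back u 1) (back u 2) (back u 3) (front u)

lemma front_mono {u u' : Fin (n + 4) → Bool} (huu : u ≤ u') : front u ≤ front u' :=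
  fun _ => huu _

lemma back_mono {u u' : Fin (n + 4) → Bool} (huu : u ≤ u') : back u ≤ back u' :=
  fun _ => huu _

lemma build_monotone {a b c h z1 z2 z3 z4 : BF n}
    (ma : Monotone a) (mb : Monotone b) (mc : Monotone c) (mh : Monotone h)
    (m1 : Monotone z1) (m2 : Monotone z2) (m3 : Monotone z3) (m4 : Monotone z4)
    (ha1 : a ≤ z1) (hb1 : b ≤ z1) (hc1 : c ≤ z1)
    (ha2 : a ≤ z2) (hb2 : dual b ≤ z2) (hc2 : dual c ≤ z2)
    (hb3 : b ≤ z3) (ha3 : dual a ≤ z3) (hc3 : dual c ≤ z3)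
    (hc4 : c ≤ z4) (ha4 : dual a ≤ z4) (hb4 : dual b ≤ z4)
    (h1 : z1 ≤ h) (h2 : z2 ≤ h) (h3 : z3 ≤ h) (h4 : z4 ≤ h) :
    Monotone (build a b c h z1 z2 z3 z4) := by
  intro u u' huu
  have step1 :
      G4 a b c h z1 z2 z3 z4 (back u 0) (back u 1) (back u 2) (back u 3) (front u) ≤
      G4 a b c h z1 z2 z3 z4 (back u' 0) (back u' 1) (back u' 2) (back u' 3) (front u) :=
    G4_mono ha1 hb1 hc1 ha2 hb2 hc2 hb3 ha3 hc3 hc4 ha4 hb4 h1 h2 h3 h4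
      (back_mono huu 0) (back_mono huu 1) (back_mono huu 2) (back_mono huu 3) _
  have step2 :
      G4 a b c h z1 z2 z3 z4 (back u' 0) (back u' 1) (back u' 2) (back u' 3) (front u) ≤
      G4 a b c h z1 z2 z3 z4 (back u' 0) (back u' 1) (back u' 2) (back u' 3) (front u') :=
    G4_monotone_comp ma mb mc mh m1 m2 m3 m4 _ _ _ _ (front_mono huu)
  exact le_trans step1 step2

lemma front_not (u : Fin (n + 4) → Bool) :
    front (fun i => ! u i) = fun i => ! front u i := rfl

lemma back_not (u : Fin (n + 4) → Bool) :
    back (fun i => ! u i) = fun k => ! back u k := rfl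

lemma build_selfDual (a b c h z1 z2 z3 z4 : BF n) :
    SelfDual (build a b c h z1 z2 z3 z4) := by
  funext u
  show build a b c h z1 z2 z3 z4 u = ! build a b c h z1 z2 z3 z4 (fun i => ! u i)
  simp only [build, front_not, back_not]
  cases hb0 : back u 0 <;> cases hb1 : back u 1 <;> cases hb2 : back u 2 <;>
    cases hb3 : back u 3 <;> simp only [Bool.not_false, Bool.not_true, G4, dual, Bool.not_not]

lemma comp_eq_self {f : BF (n + 4)} {u : Fin (n + 4) → Bool} {w : Fin 4 → Bool}
    (hw : w = back u) : comp f w (front u) = f u := by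
  rw [hw]
  show f (glue (front u) (back u)) = f u
  rw [glue_front_back]

lemma build_comp {f : BF (n + 4)} (hf : SelfDual f) :
    build (comp f ![false, false, true, true]) (comp f ![false, true, false, true])
      (comp f ![false, true, true, false]) (comp f ![true, true, true, true])
      (comp f ![false, true, true, true]) (comp f ![true, false, true, true])
      (comp f ![true, true, false, true]) (comp f ![true, true, true, false]) = f := by
  funext u
  simp only [build]
  cases hb0 : back u 0 <;> cases hb1 : back u 1 <;> cases hb2 : back u 2 <;>
      cases hb3 : back u 3 <;> simp only [G4] <;>
    first
      | exact comp_eq_self (by funext k; fin_cases k <;> simp [hb0, hb1, hb2, hb3])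
      | (rw [dual_comp hf];
         exact comp_eq_self (by funext k; fin_cases k <;> simp [hb0, hb1, hb2, hb3]))

lemma comp_build (a b c h z1 z2 z3 z4 : BF n) (w : Fin 4 → Bool) :
    comp (build a b c h z1 z2 z3 z4) w = G4 a b c h z1 z2 z3 z4 (w 0) (w 1) (w 2) (w 3) := by
  funext v
  simp only [comp, build, back_glue, front_glue]

open Classical in
lemma card_filter_fst {α β : Type*} [Fintype α] [Fintype β]
    (p : α → Prop) (q : α → β → Prop) :
    (Finset.univ.filter fun x : α × β => p x.1 ∧ q x.1 x.2).card =
      ∑ a ∈ Finset.univ.filter p, (Finset.univ.filter (q a)).card := by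
  classical
  rw [Finset.card_filter, ← Finset.univ_product_univ, Finset.sum_product, Finset.sum_filter]
  refine Finset.sum_congr rfl fun a _ => ?_
  by_cases hp : p a
  · rw [if_pos hp, Finset.card_filter]
    refine Finset.sum_congr rfl fun b _ => ?_
    by_cases hq : q a b
    · rw [if_pos hq, if_pos ⟨hp, hq⟩]
    · rw [if_neg hq, if_neg (by tauto)]
  · rw [if_neg hp]
    refine Finset.sum_eq_zero fun b _ => ?_
    rw [if_neg (by tauto)]

open Classical in
lemma card_filter_indep {α β : Type*} [Fintype α] [Fintype β]
    (p : α → Prop) (q : β → Prop) :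
    (Finset.univ.filter fun x : α × β => p x.1 ∧ q x.2).card =
      (Finset.univ.filter p).card * (Finset.univ.filter q).card := by
  classical
  rw [← Finset.univ_product_univ, Finset.filter_product, Finset.card_product]

abbrev Tup (n : ℕ) := Σ _ : BF n, Σ _ : BF n, Σ _ : BF n, Σ _ : BF n,
  (BF n × BF n × BF n × BF n)

open Classical in
noncomputable def Sfin (n : ℕ) : Finset (Tup n) :=
  (Dset n).sigma fun a => (Dset n).sigma fun b => (Dset n).sigma fun c =>
    ((Dset n).filter fun h => a ⊔ b ⊔ c ⊔ dual a ⊔ dual b ⊔ dual c ≤ h).sigma fun h =>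
      (Finset.univ.filter fun z : BF n => Monotone z ∧ a ⊔ b ⊔ c ≤ z ∧ z ≤ h) ×ˢ
      ((Finset.univ.filter fun z : BF n => Monotone z ∧ a ⊔ dual b ⊔ dual c ≤ z ∧ z ≤ h) ×ˢ
      ((Finset.univ.filter fun z : BF n => Monotone z ∧ b ⊔ dual a ⊔ dual c ≤ z ∧ z ≤ h) ×ˢ
      (Finset.univ.filter fun z : BF n => Monotone z ∧ c ⊔ dual a ⊔ dual b ≤ z ∧ z ≤ h)))

open Classical in
lemma Sfin_card (n : ℕ) :
    (Sfin n).card =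
      ∑ a ∈ Dset n, ∑ b ∈ Dset n, ∑ c ∈ Dset n,
        ∑ h ∈ (Dset n).filter
            (fun h => a ⊔ b ⊔ c ⊔ dual a ⊔ dual b ⊔ dual c ≤ h),
          re (a ⊔ b ⊔ c) h * re (a ⊔ dual b ⊔ dual c) h *
            re (b ⊔ dual a ⊔ dual c) h * re (c ⊔ dual a ⊔ dual b) h := by
  simp only [Sfin, Finset.card_sigma, Finset.card_product, re, mul_assoc]

noncomputable def toTup (f : BF (n + 4)) : Tup n :=
  ⟨comp f ![false, false, true, true], comp f ![false, true, false, true],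
   comp f ![false, true, true, false], comp f ![true, true, true, true],
   (comp f ![false, true, true, true], comp f ![true, false, true, true],
    comp f ![true, true, false, true], comp f ![true, true, true, false])⟩

noncomputable def ofTup (x : Tup n) : BF (n + 4) :=
  build x.1 x.2.1 x.2.2.1 x.2.2.2.1 x.2.2.2.2.1 x.2.2.2.2.2.1 x.2.2.2.2.2.2.1 x.2.2.2.2.2.2.2

lemma vecLe {w w' : Fin 4 → Bool} (h0 : w 0 ≤ w' 0) (h1 : w 1 ≤ w' 1)
    (h2 : w 2 ≤ w' 2) (h3 : w 3 ≤ w' 3) : w ≤ w' := by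
  intro k
  fin_cases k
  · exact h0
  · exact h1
  · exact h2
  · exact h3

open Classical in
lemma toTup_mem {f : BF (n + 4)} (hm : Monotone f) (hsd : SelfDual f) :
    toTup f ∈ Sfin n := by
  have hd : ∀ w : Fin 4 → Bool, dual (comp f w) = comp f (fun k => ! w k) := dual_comp hsd
  have e0011 : dual (comp f ![false, false, true, true]) = comp f ![true, true, false, false] :=
    (hd _).trans (congrArg (comp f) (by funext k; fin_cases k <;> rfl))
  have e0101 : dual (comp f ![false, true, false, true]) = comp f ![true, false, true, false] :=
    (hd _).trans (congrArg (comp f) (by funext k; fin_cases k <;> rfl))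
  have e0110 : dual (comp f ![false, true, true, false]) = comp f ![true, false, false, true] :=
    (hd _).trans (congrArg (comp f) (by funext k; fin_cases k <;> rfl))
  have cle : ∀ w w' : Fin 4 → Bool, w 0 ≤ w' 0 → w 1 ≤ w' 1 → w 2 ≤ w' 2 → w 3 ≤ w' 3 →
      comp f w ≤ comp f w' := fun w w' h0 h1 h2 h3 =>
    comp_le_comp hm (vecLe h0 h1 h2 h3)
  simp only [Sfin, toTup, Finset.mem_sigma, Finset.mem_product, Finset.mem_filter,
    Finset.mem_univ, Dset, true_and]
  refine ⟨monotone_comp hm _, monotone_comp hm _, monotone_comp hm _,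
    ⟨monotone_comp hm _, ?_⟩, ⟨monotone_comp hm _, ?_, ?_⟩, ⟨monotone_comp hm _, ?_, ?_⟩,
    ⟨monotone_comp hm _, ?_, ?_⟩, monotone_comp hm _, ?_, ?_⟩
  · rw [e0011, e0101, e0110]
    refine sup_le (sup_le (sup_le (sup_le (sup_le ?_ ?_) ?_) ?_) ?_) ?_ <;>
      exact cle _ _ (by decide) (by decide) (by decide) (by decide)
  · refine sup_le (sup_le ?_ ?_) ?_ <;>
      exact cle _ _ (by decide) (by decide) (by decide) (by decide)
  · exact cle _ _ (by decide) (by decide) (by decide) (by decide)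
  · rw [e0101, e0110]
    refine sup_le (sup_le ?_ ?_) ?_ <;>
      exact cle _ _ (by decide) (by decide) (by decide) (by decide)
  · exact cle _ _ (by decide) (by decide) (by decide) (by decide)
  · rw [e0011, e0110]
    refine sup_le (sup_le ?_ ?_) ?_ <;>
      exact cle _ _ (by decide) (by decide) (by decide) (by decide)
  · exact cle _ _ (by decide) (by decide) (by decide) (by decide)
  · rw [e0011, e0101]
    refine sup_le (sup_le ?_ ?_) ?_ <;>
      exact cle _ _ (by decide) (by decide) (by decide) (by decide)
  · exact cle _ _ (by decide) (by decide) (by decide) (by decide)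

open Classical in
lemma ofTup_mem {x : Tup n} (hx : x ∈ Sfin n) :
    Monotone (ofTup x) ∧ SelfDual (ofTup x) := by
  obtain ⟨a, b, c, h, z1, z2, z3, z4⟩ := x
  simp only [Sfin, Finset.mem_sigma, Finset.mem_product, Finset.mem_filter,
    Finset.mem_univ, Dset, true_and] at hx
  obtain ⟨ma, mb, mc, ⟨mh, -⟩, ⟨m1, hl1, hu1⟩, ⟨m2, hl2, hu2⟩, ⟨m3, hl3, hu3⟩,
    m4, hl4, hu4⟩ := hx
  have ha1 : a ≤ z1 := ((le_sup_left.trans le_sup_left).trans hl1)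
  have hb1 : b ≤ z1 := ((le_sup_right.trans le_sup_left).trans hl1)
  have hc1 : c ≤ z1 := (le_sup_right.trans hl1)
  have ha2 : a ≤ z2 := ((le_sup_left.trans le_sup_left).trans hl2)
  have hb2 : dual b ≤ z2 := ((le_sup_right.trans le_sup_left).trans hl2)
  have hc2 : dual c ≤ z2 := (le_sup_right.trans hl2)
  have hb3 : b ≤ z3 := ((le_sup_left.trans le_sup_left).trans hl3)
  have ha3 : dual a ≤ z3 := ((le_sup_right.trans le_sup_left).trans hl3)
  have hc3 : dual c ≤ z3 := (le_sup_right.trans hl3)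
  have hc4 : c ≤ z4 := ((le_sup_left.trans le_sup_left).trans hl4)
  have ha4 : dual a ≤ z4 := ((le_sup_right.trans le_sup_left).trans hl4)
  have hb4 : dual b ≤ z4 := (le_sup_right.trans hl4)
  exact ⟨build_monotone ma mb mc mh m1 m2 m3 m4 ha1 hb1 hc1 ha2 hb2 hc2 hb3 ha3 hc3
    hc4 ha4 hb4 hu1 hu2 hu3 hu4, build_selfDual _ _ _ _ _ _ _ _⟩

lemma left_inv_lemma {f : BF (n + 4)} (hsd : SelfDual f) : ofTup (toTup f) = f :=
  build_comp hsd

lemma right_inv_lemma (x : Tup n) : toTup (ofTup x) = x := by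
  obtain ⟨a, b, c, h, z1, z2, z3, z4⟩ := x
  simp only [toTup, ofTup, comp_build]
  norm_num [G4]
  exact ⟨rfl, rfl, rfl, rfl, rfl, rfl, rfl, rfl⟩


open Classical in
theorem stmt_16 (n : ℕ) :
    lambda (n + 4) =
      ∑ a ∈ Dset n, ∑ b ∈ Dset n, ∑ c ∈ Dset n,
        ∑ h ∈ (Dset n).filter
            (fun h => a ⊔ b ⊔ c ⊔ dual a ⊔ dual b ⊔ dual c ≤ h),
          re (a ⊔ b ⊔ c) h * re (a ⊔ dual b ⊔ dual c) h *
            re (b ⊔ dual a ⊔ dual c) h * re (c ⊔ dual a ⊔ dual b) h := by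
  rw [← Sfin_card n]
  show (Finset.univ.filter fun x : BF (n + 4) => Monotone x ∧ SelfDual x).card = (Sfin n).card
  refine Finset.card_nbij' toTup ofTup ?_ ?_ ?_ ?_
  · intro f hf
    have hf' := (Finset.mem_filter.mp hf).2
    exact toTup_mem hf'.1 hf'.2
  · intro x hx
    exact Finset.mem_filter.mpr ⟨Finset.mem_univ _, ofTup_mem hx⟩
  · intro f hf
    exact left_inv_lemma (Finset.mem_filter.mp hf).2.2
  · intro x _
    exact right_inv_lemma x
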